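/- The entailment p ∧ ¬p ∧ q ⊨_{BD△} p ∧ ¬p holds, but for every BD△ model and every world w we have w ⊭⁺ t(p ∧ ¬p), where t(ψ) := △ψ ∧ ¬△¬ψ; equivalently, t(p ∧ ¬p) entails ⊥. -/
import Mathlib


inductive BDForm : Type
  | var : ℕ → BDForm
  | neg : BDForm → BDForm
  | and : BDForm → BDForm → BDForm
  | or : BDForm → BDForm → BDForm
  | delta : BDForm → BDForm
deriving DecidableEq

structure BDModel where
  W : Type
  vp : ℕ → W → Prop
  vm : ℕ → W → Prop

def BDModel.sat (M : BDModel) : Bool → BDForm → M.W → Prop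
  | true, .var p, w => M.vp p w
  | false, .var p, w => M.vm p w
  | b, .neg φ, w => M.sat (!b) φ w
  | true, .and φ ψ, w => M.sat true φ w ∧ M.sat true ψ w
  | false, .and φ ψ, w => M.sat false φ w ∨ M.sat false ψ w
  | true, .or φ ψ, w => M.sat true φ w ∨ M.sat true ψ w
  | false, .or φ ψ, w => M.sat false φ w ∧ M.sat false ψ w
  | true, .delta φ, w => M.sat true φ w
  | false, .delta φ, w => ¬ M.sat true φ w

/-- BD△ entailment: positive extension inclusion and reverse negative inclusion, in every model. -/
def Entails (φ χ : BDForm) : Prop :=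
  ∀ (M : BDModel) (w : M.W),
    (M.sat true φ w → M.sat true χ w) ∧ (M.sat false χ w → M.sat false φ w)

/-- the value-detecting formulas -/
def tF (φ : BDForm) : BDForm := (φ.delta).and ((φ.neg.delta).neg)
def bF (φ : BDForm) : BDForm := (φ.delta).and (φ.neg.delta)
def nF (φ : BDForm) : BDForm := ((φ.delta).neg).and ((φ.neg.delta).neg)
def fF (φ : BDForm) : BDForm := ((φ.delta).neg).and (φ.neg.delta)

def topF : BDForm := ((BDForm.var 0).delta).or (((BDForm.var 0).delta).neg)
def botF : BDForm := topF.neg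

/-- p ∧ ¬p ∧ q ⊨ p ∧ ¬p, yet t(p ∧ ¬p) is positively satisfied nowhere;
equivalently t(p ∧ ¬p) entails ⊥. -/
theorem stmt6 :
    Entails ((BDForm.var 0).and (((BDForm.var 0).neg).and (BDForm.var 1)))
      ((BDForm.var 0).and ((BDForm.var 0).neg)) ∧
    (∀ (M : BDModel) (w : M.W),
      ¬ M.sat true (tF ((BDForm.var 0).and ((BDForm.var 0).neg))) w) ∧
    Entails (tF ((BDForm.var 0).and ((BDForm.var 0).neg))) botF := by
  have key : ∀ (M : BDModel) (w : M.W),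
      ¬ M.sat true (tF ((BDForm.var 0).and ((BDForm.var 0).neg))) w := by
    intro M w h
    simp [tF, BDModel.sat] at h
    exact h.2.2 h.1.1
  refine ⟨fun M w => ⟨fun h => ⟨h.1, h.2.1⟩,
    fun h => h.elim Or.inl (fun x => Or.inr (Or.inl x))⟩, key,
    fun M w => ⟨fun h => absurd h (key M w), fun _ => ?_⟩⟩
  simp [tF, botF, topF, BDModel.sat]
  tauto
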